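/- (Chen's identity, coefficient form) Let X : [a,b] → ℝ^d and Y : [b,c] → ℝ^d be continuously differentiable paths, and let X ∗ Y : [a,c] → ℝ^d be their concatenation: (X∗Y)_t = X_t for t ∈ [a,b] and (X∗Y)_t = X_b + (Y_t − Y_b) for t ∈ [b,c]. Then for every k ≥ 1 and every word (i₁,…,i_k) with letters in {1,…,d}: S(X∗Y)^{i₁,…,i_k}_{a,c} = Σ_{j=0}^{k} S(X)^{i₁,…,i_j}_{a,b} · S(Y)^{i_{j+1},…,i_k}_{b,c}, where the terms with j = 0 and j = k involve the empty-word convention S^∅ = 1. -/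

import Mathlib

open MeasureTheory

/-- The `k`-fold iterated integral (signature coefficient) of a path
`X : ℝ → (Fin d → ℝ)` over `[a,b]` along the word `w`, defined as the Lebesgue
integral of `∏ i, (X^{w i})'(t i)` over the simplex `a < t₁ < ⋯ < t_k < b`.
For the empty word (`k = 0`) this equals `1` by convention. -/
noncomputable def sigTerm {d : ℕ} (X : ℝ → Fin d → ℝ) (a b : ℝ) {k : ℕ}
    (w : Fin k → Fin d) : ℝ :=
  ∫ t in {t : Fin k → ℝ | StrictMono t ∧ ∀ i, t i ∈ Set.Ioo a b},
    ∏ i, deriv (fun s => X s (w i)) (t i)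




lemma measurableSet_strictMono' {k : ℕ} : MeasurableSet {t : Fin k → ℝ | StrictMono t} := by
  have : {t : Fin k → ℝ | StrictMono t} =
      ⋂ (i : Fin k), ⋂ (j : Fin k), {t : Fin k → ℝ | i < j → t i < t j} := by
    ext t; simp [StrictMono, Set.mem_iInter]
  rw [this]
  refine MeasurableSet.iInter fun i => MeasurableSet.iInter fun j => ?_
  by_cases h : i < j
  · simp only [h, forall_true_left]
    exact measurableSet_lt (measurable_pi_apply i) (measurable_pi_apply j)
  · simp [h]

def chenPiece (a b c : ℝ) (k p : ℕ) : Set (Fin k → ℝ) :=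
  {t | StrictMono t ∧ (∀ i : Fin k, (i : ℕ) < p → t i ∈ Set.Ioo a b) ∧
    (∀ i : Fin k, p ≤ (i : ℕ) → t i ∈ Set.Ioo b c)}

lemma measurableSet_chenPiece (a b c : ℝ) (k p : ℕ) : MeasurableSet (chenPiece a b c k p) := by
  have : chenPiece a b c k p = {t : Fin k → ℝ | StrictMono t} ∩
      ((⋂ i : Fin k, {t : Fin k → ℝ | (i : ℕ) < p → t i ∈ Set.Ioo a b}) ∩
       (⋂ i : Fin k, {t : Fin k → ℝ | p ≤ (i : ℕ) → t i ∈ Set.Ioo b c})) := by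
    ext t; simp [chenPiece, Set.mem_iInter]
  rw [this]
  refine measurableSet_strictMono'.inter (MeasurableSet.inter ?_ ?_) <;>
    refine MeasurableSet.iInter fun i => ?_
  · by_cases h : (i : ℕ) < p
    · simp only [h, forall_true_left]
      exact (measurable_pi_apply i) measurableSet_Ioo
    · simp [h]
  · by_cases h : p ≤ (i : ℕ)
    · simp only [h, forall_true_left]
      exact (measurable_pi_apply i) measurableSet_Ioo
    · simp [h]

lemma measurableSet_simplex' {k : ℕ} (a b : ℝ) :
    MeasurableSet {t : Fin k → ℝ | StrictMono t ∧ ∀ i, t i ∈ Set.Ioo a b} := by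
  have : {t : Fin k → ℝ | StrictMono t ∧ ∀ i, t i ∈ Set.Ioo a b} =
      {t : Fin k → ℝ | StrictMono t} ∩ ⋂ i : Fin k, {t : Fin k → ℝ | t i ∈ Set.Ioo a b} := by
    ext t; simp [Set.mem_iInter]
  rw [this]
  exact measurableSet_strictMono'.inter <|
    MeasurableSet.iInter fun i => (measurable_pi_apply i) measurableSet_Ioo

lemma chen_split {k p q : ℕ} (hpq : p + q = k) (a b c : ℝ) (h : Fin k → ℝ → ℝ) :
    (∫ t in chenPiece a b c k p, ∏ i, h i (t i)) =
      (∫ u in {u : Fin p → ℝ | StrictMono u ∧ ∀ i, u i ∈ Set.Ioo a b},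
        ∏ i, h ((finSumFinEquiv.trans (finCongr hpq)) (Sum.inl i)) (u i)) *
      (∫ v in {v : Fin q → ℝ | StrictMono v ∧ ∀ i, v i ∈ Set.Ioo b c},
        ∏ i, h ((finSumFinEquiv.trans (finCongr hpq)) (Sum.inr i)) (v i)) := by
  set e : Fin p ⊕ Fin q ≃ Fin k := finSumFinEquiv.trans (finCongr hpq) with he
  set φ : ((Fin p → ℝ) × (Fin q → ℝ)) ≃ᵐ (Fin k → ℝ) :=
    (MeasurableEquiv.sumPiEquivProdPi fun _ : Fin p ⊕ Fin q => ℝ).symm.trans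
      (MeasurableEquiv.piCongrLeft (fun _ => ℝ) e) with hφ
  have hmp : MeasurePreserving φ volume volume :=
    (volume_measurePreserving_piCongrLeft (fun _ => ℝ) e).comp
      (volume_measurePreserving_sumPiEquivProdPi_symm (fun _ : Fin p ⊕ Fin q => ℝ))
  have he1 : ∀ i : Fin p, ((e (Sum.inl i)) : ℕ) = (i : ℕ) := by
    intro i; simp [he]
  have he2 : ∀ i : Fin q, ((e (Sum.inr i)) : ℕ) = p + (i : ℕ) := by
    intro i; simp [he]
  have hval1 : ∀ (u : Fin p → ℝ) (v : Fin q → ℝ) (i : Fin p), φ (u, v) (e (Sum.inl i)) = u i := by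
    intro u v i
    show (MeasurableEquiv.piCongrLeft (fun _ => ℝ) e)
      ((MeasurableEquiv.sumPiEquivProdPi fun _ : Fin p ⊕ Fin q => ℝ).symm (u, v)) (e (Sum.inl i)) = u i
    rw [MeasurableEquiv.coe_piCongrLeft, Equiv.piCongrLeft_apply_apply]
    rfl
  have hval2 : ∀ (u : Fin p → ℝ) (v : Fin q → ℝ) (i : Fin q), φ (u, v) (e (Sum.inr i)) = v i := by
    intro u v i
    show (MeasurableEquiv.piCongrLeft (fun _ => ℝ) e)
      ((MeasurableEquiv.sumPiEquivProdPi fun _ : Fin p ⊕ Fin q => ℝ).symm (u, v)) (e (Sum.inr i)) = v i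
    rw [MeasurableEquiv.coe_piCongrLeft, Equiv.piCongrLeft_apply_apply]
    rfl
  have key : ∀ (u : Fin p → ℝ) (v : Fin q → ℝ) (m : Fin k),
      φ (u, v) m = if hm : (m : ℕ) < p then u ⟨(m : ℕ), hm⟩
        else v ⟨(m : ℕ) - p, by omega⟩ := by
    intro u v m
    obtain ⟨s, rfl⟩ := e.surjective m
    cases s with
    | inl i =>
      have hlt : ((e (Sum.inl i)) : ℕ) < p := by rw [he1]; exact i.isLt
      rw [hval1, dif_pos hlt]
      exact congrArg u (Fin.ext (show (i : ℕ) = ((e (Sum.inl i)) : ℕ) from (he1 i).symm))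
    | inr i =>
      have hge : ¬ ((e (Sum.inr i)) : ℕ) < p := by rw [he2]; omega
      rw [hval2, dif_neg hge]
      exact congrArg v (Fin.ext (show (i : ℕ) = ((e (Sum.inr i)) : ℕ) - p by rw [he2]; omega))
  rw [← hmp.setIntegral_preimage_emb φ.measurableEmbedding (fun t => ∏ i, h i (t i))]
  have hset : φ ⁻¹' chenPiece a b c k p =
      {u : Fin p → ℝ | StrictMono u ∧ ∀ i, u i ∈ Set.Ioo a b} ×ˢ
      {v : Fin q → ℝ | StrictMono v ∧ ∀ i, v i ∈ Set.Ioo b c} := by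
    ext ⟨u, v⟩
    simp only [chenPiece, Set.mem_preimage, Set.mem_setOf_eq, Set.mem_prod]
    constructor
    · rintro ⟨hsm, h1, h2⟩
      refine ⟨⟨?_, ?_⟩, ?_, ?_⟩
      · intro i i' hii'
        have hlt : e (Sum.inl i) < e (Sum.inl i') := by
          rw [Fin.lt_def, he1, he1]; exact hii'
        have := hsm hlt
        rwa [hval1, hval1] at this
      · intro i
        have := h1 (e (Sum.inl i)) (by rw [he1]; exact i.isLt)
        rwa [hval1] at this
      · intro i i' hii'
        have hlt : e (Sum.inr i) < e (Sum.inr i') := by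
          rw [Fin.lt_def, he2, he2]; omega
        have := hsm hlt
        rwa [hval2, hval2] at this
      · intro i
        have := h2 (e (Sum.inr i)) (by rw [he2]; omega)
        rwa [hval2] at this
    · rintro ⟨⟨hu, hub⟩, hv, hvb⟩
      refine ⟨?_, ?_, ?_⟩
      · intro m m' hmm'
        rw [Fin.lt_def] at hmm'
        rw [key, key]
        by_cases h1 : (m : ℕ) < p <;> by_cases h2 : (m' : ℕ) < p
        · rw [dif_pos h1, dif_pos h2]
          exact hu (show (⟨(m : ℕ), h1⟩ : Fin p) < ⟨(m' : ℕ), h2⟩ from hmm')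
        · rw [dif_pos h1, dif_neg h2]
          exact lt_trans (hub _).2 (hvb _).1
        · omega
        · rw [dif_neg h1, dif_neg h2]
          exact hv (show (⟨(m : ℕ) - p, _⟩ : Fin q) < ⟨(m' : ℕ) - p, _⟩ by
            rw [Fin.lt_def]; simp; omega)
      · intro m hm
        rw [key, dif_pos hm]; exact hub _
      · intro m hm
        rw [key, dif_neg (by omega)]; exact hvb _
  rw [hset]
  have hfun : ∀ z : (Fin p → ℝ) × (Fin q → ℝ), (∏ i, h i (φ z i)) =
      (∏ i : Fin p, h (e (Sum.inl i)) (z.1 i)) * (∏ i : Fin q, h (e (Sum.inr i)) (z.2 i)) := by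
    rintro ⟨u, v⟩
    rw [← Equiv.prod_comp e (fun m => h m (φ (u, v) m)), Fintype.prod_sum_type]
    simp only [hval1, hval2]
  simp only [hfun]
  rw [Measure.volume_eq_prod]
  exact setIntegral_prod_mul (fun u : Fin p → ℝ => ∏ i, h (e (Sum.inl i)) (u i))
    (fun v : Fin q → ℝ => ∏ i, h (e (Sum.inr i)) (v i)) _ _

lemma deriv_concat_lt {d : ℕ} (X Y : ℝ → Fin d → ℝ) (b : ℝ) (m : Fin d) {s : ℝ} (hs : s < b) :
    deriv (fun t => (if t ≤ b then X t else X b + (Y t - Y b)) m) s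
      = deriv (fun t => X t m) s := by
  apply Filter.EventuallyEq.deriv_eq
  filter_upwards [Iio_mem_nhds hs] with t ht
  have : t ≤ b := le_of_lt (Set.mem_Iio.1 ht)
  simp [this]

lemma deriv_concat_gt {d : ℕ} (X Y : ℝ → Fin d → ℝ) (b : ℝ) (m : Fin d) {s : ℝ} (hs : b < s) :
    deriv (fun t => (if t ≤ b then X t else X b + (Y t - Y b)) m) s
      = deriv (fun t => Y t m) s := by
  have h1 : deriv (fun t => (if t ≤ b then X t else X b + (Y t - Y b)) m) s
      = deriv (fun t => X b m + (Y t m - Y b m)) s := by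
    apply Filter.EventuallyEq.deriv_eq
    filter_upwards [Ioi_mem_nhds hs] with t ht
    have : ¬ t ≤ b := not_le.2 (Set.mem_Ioi.1 ht)
    simp [this]
  rw [h1, deriv_const_add, deriv_sub_const]

lemma cont_deriv_coord {d : ℕ} {X : ℝ → Fin d → ℝ} (hX : ContDiff ℝ 1 X) (m : Fin d) :
    Continuous (deriv fun s => X s m) := by
  have : ContDiff ℝ 1 (fun s => X s m) :=
    (ContinuousLinearMap.proj m : (Fin d → ℝ) →L[ℝ] ℝ).contDiff.comp hX
  exact this.continuous_deriv le_rfl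

lemma hyperplane_null {k : ℕ} (i : Fin k) (b : ℝ) :
    volume {t : Fin k → ℝ | t i = b} = 0 := by
  have hset : {t : Fin k → ℝ | t i = b}
      = Set.pi Set.univ (fun m => if m = i then ({b} : Set ℝ) else Set.univ) := by
    ext t
    simp only [Set.mem_setOf_eq, Set.mem_univ_pi]
    constructor
    · intro h m
      by_cases hm : m = i
      · subst hm; simp [h]
      · simp [hm]
    · intro h
      have := h i
      simpa using this
  rw [hset, volume_pi_pi]
  apply Finset.prod_eq_zero (Finset.mem_univ i)
  simp


/-- Chen's identity in coefficient form: the iterated integral of the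
concatenation `X ∗ Y` along a word of length `k` equals
`Σ_{j=0}^k S(X)^{i₁,…,i_j}_{a,b} · S(Y)^{i_{j+1},…,i_k}_{b,c}`,
with the empty-word convention for `j = 0` and `j = k`. -/
theorem sigTerm_chen {d : ℕ} (a b c : ℝ) (hab : a ≤ b) (hbc : b ≤ c)
    (X Y : ℝ → Fin d → ℝ) (hX : ContDiff ℝ 1 X) (hY : ContDiff ℝ 1 Y)
    (k : ℕ) (hk : 1 ≤ k) (w : Fin k → Fin d) :
    sigTerm (fun t => if t ≤ b then X t else X b + (Y t - Y b)) a c w =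
      ∑ j : Fin (k + 1),
        sigTerm X a b
            (fun i : Fin (j : ℕ) => w ⟨i.1, by have h1 := i.isLt; have h2 := j.isLt; omega⟩) *
          sigTerm Y b c
            (fun i : Fin (k - (j : ℕ)) => w ⟨(j : ℕ) + i.1, by have h1 := i.isLt; omega⟩) := by
  unfold sigTerm
  -- the integrand of the left-hand side
  set f : (Fin k → ℝ) → ℝ :=
    fun t => ∏ i, deriv (fun s => (fun t' => if t' ≤ b then X t' else X b + (Y t' - Y b)) s (w i)) (t i) with hf
  -- the "nice" integrand on each piece
  set h : Fin (k+1) → Fin k → ℝ → ℝ := fun j i =>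
    if (i : ℕ) < (j : ℕ) then deriv (fun s => X s (w i)) else deriv (fun s => Y s (w i)) with hh
  have heq : ∀ j : Fin (k+1), Set.EqOn f (fun t => ∏ i, h j i (t i)) (chenPiece a b c k j) := by
    intro j t ht
    refine Finset.prod_congr rfl fun i _ => ?_
    by_cases hi : (i : ℕ) < (j : ℕ)
    · have hmem := ht.2.1 i hi
      simp only [hh, hi, if_true]
      exact deriv_concat_lt X Y b (w i) hmem.2
    · have hmem := ht.2.2 i (le_of_not_gt hi)
      simp only [hh, hi, if_false]
      exact deriv_concat_gt X Y b (w i) hmem.1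
  have hcont : ∀ j : Fin (k+1), Continuous (fun t : Fin k → ℝ => ∏ i, h j i (t i)) := by
    intro j
    refine continuous_finset_prod _ fun i _ => ?_
    by_cases hi : (i : ℕ) < (j : ℕ)
    · simp only [hh, hi, if_true]
      exact (cont_deriv_coord hX (w i)).comp (continuous_apply i)
    · simp only [hh, hi, if_false]
      exact (cont_deriv_coord hY (w i)).comp (continuous_apply i)
  have hsubIcc : ∀ j : Fin (k+1), chenPiece a b c k j ⊆ Set.pi Set.univ fun _ : Fin k => Set.Icc a c := by
    intro j t ht
    rw [Set.mem_univ_pi]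
    intro i
    by_cases hi : (i : ℕ) < (j : ℕ)
    · have := ht.2.1 i hi
      exact ⟨le_of_lt this.1, le_trans (le_of_lt this.2) hbc⟩
    · have := ht.2.2 i (le_of_not_gt hi)
      exact ⟨le_trans hab (le_of_lt this.1), le_of_lt this.2⟩
  have hint : ∀ j : Fin (k+1), IntegrableOn f (chenPiece a b c k j) := by
    intro j
    have h1 : IntegrableOn (fun t : Fin k → ℝ => ∏ i, h j i (t i))
        (Set.pi Set.univ fun _ : Fin k => Set.Icc a c) :=
      (hcont j).continuousOn.integrableOn_compact (isCompact_univ_pi fun _ => isCompact_Icc)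
    exact (IntegrableOn.mono_set h1 (hsubIcc j)).congr_fun (heq j).symm
      (measurableSet_chenPiece a b c k j)
  -- the simplex is a.e. equal to the union of the pieces
  have hsubS : ∀ j : Fin (k+1), chenPiece a b c k j ⊆
      {t : Fin k → ℝ | StrictMono t ∧ ∀ i, t i ∈ Set.Ioo a c} := by
    rintro j t ⟨hsm, h1, h2⟩
    refine ⟨hsm, fun i => ?_⟩
    by_cases hi : (i : ℕ) < (j : ℕ)
    · have := h1 i hi
      exact ⟨this.1, lt_of_lt_of_le this.2 hbc⟩
    · have := h2 i (le_of_not_gt hi)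
      exact ⟨lt_of_le_of_lt hab this.1, this.2⟩
  have haeeq : {t : Fin k → ℝ | StrictMono t ∧ ∀ i, t i ∈ Set.Ioo a c}
      =ᵐ[volume] ⋃ j : Fin (k+1), chenPiece a b c k j := by
    rw [MeasureTheory.ae_eq_set]
    constructor
    · refine measure_mono_null ?_ (measure_iUnion_null fun i : Fin k => hyperplane_null i b)
      rintro t ⟨⟨hsm, hio⟩, hnot⟩
      by_contra hcon
      simp only [Set.mem_iUnion, Set.mem_setOf_eq, not_exists] at hcon
      apply hnot
      by_cases hA : (Finset.univ.filter fun i : Fin k => t i < b).Nonempty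
      · set i₀ := Finset.max' _ hA with hi₀
        have hi₀mem : i₀ ∈ Finset.univ.filter fun i : Fin k => t i < b :=
          Finset.max'_mem _ hA
        have hi₀lt : t i₀ < b := (Finset.mem_filter.1 hi₀mem).2
        refine Set.mem_iUnion.2 ⟨⟨(i₀ : ℕ) + 1, by have := i₀.isLt; omega⟩, hsm, ?_, ?_⟩
        · intro i hi
          have hle : i ≤ i₀ := by
            rw [Fin.le_def]; simpa using Nat.lt_succ_iff.1 hi
          exact ⟨(hio i).1, lt_of_le_of_lt (hsm.monotone hle) hi₀lt⟩
        · intro i hi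
          have hgt : i₀ < i := by
            rw [Fin.lt_def]; simpa using Nat.lt_of_succ_le hi
          have hni : i ∉ Finset.univ.filter fun i : Fin k => t i < b := by
            intro hmem
            exact absurd (Finset.le_max' _ i hmem) (not_le.2 hgt)
          have : ¬ t i < b := by
            intro hlt
            exact hni (Finset.mem_filter.2 ⟨Finset.mem_univ i, hlt⟩)
          exact ⟨lt_of_le_of_ne (le_of_not_gt this) (Ne.symm (hcon i)), (hio i).2⟩
      · refine Set.mem_iUnion.2 ⟨⟨0, by omega⟩, hsm, ?_, ?_⟩
        · intro i hi
          simp at hi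
        · intro i _
          rw [Finset.not_nonempty_iff_eq_empty, Finset.filter_eq_empty_iff] at hA
          have : ¬ t i < b := hA (Finset.mem_univ i)
          exact ⟨lt_of_le_of_ne (le_of_not_gt this) (Ne.symm (hcon i)), (hio i).2⟩
    · have : (⋃ j : Fin (k+1), chenPiece a b c k j) \
          {t : Fin k → ℝ | StrictMono t ∧ ∀ i, t i ∈ Set.Ioo a c} = ∅ := by
        rw [Set.diff_eq_empty]
        exact Set.iUnion_subset hsubS
      rw [this, measure_empty]
  have hdisj : Pairwise (Function.onFun Disjoint fun j : Fin (k+1) => chenPiece a b c k j) := by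
    have hgen : ∀ j j' : Fin (k+1), j < j' →
        Disjoint (chenPiece a b c k j) (chenPiece a b c k j') := by
      intro j j' hjj'
      rw [Set.disjoint_left]
      rintro t ⟨_, h1, h2⟩ ⟨_, h1', h2'⟩
      rw [Fin.lt_def] at hjj'
      have hjk : (j : ℕ) < k := by have := j'.isLt; omega
      have hA := h2 ⟨(j : ℕ), hjk⟩ (by simp)
      have hB := h1' ⟨(j : ℕ), hjk⟩ (by simpa using hjj')
      exact absurd (lt_trans hA.1 hB.2) (lt_irrefl b)
    intro j j' hne
    rcases lt_or_gt_of_ne hne with hlt | hlt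
    · exact hgen j j' hlt
    · exact (hgen j' j hlt).symm
  rw [setIntegral_congr_set haeeq,
    integral_iUnion_fintype (s := fun j : Fin (k+1) => chenPiece a b c k j)
      (fun j => measurableSet_chenPiece a b c k (j : ℕ)) hdisj hint]
  refine Finset.sum_congr rfl fun j _ => ?_
  have hpq : (j : ℕ) + (k - (j : ℕ)) = k := by have := j.isLt; omega
  rw [setIntegral_congr_fun (measurableSet_chenPiece a b c k j) (heq j),
    chen_split hpq a b c (h j)]
  congr 1
  · refine integral_congr_ae (Filter.EventuallyEq.of_eq (funext fun u => ?_))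
    refine Finset.prod_congr rfl fun i _ => ?_
    have hc : (((finSumFinEquiv.trans (finCongr hpq)) (Sum.inl i)) : ℕ) = (i : ℕ) := by simp
    have hidx : ((finSumFinEquiv.trans (finCongr hpq)) (Sum.inl i))
        = (⟨(i : ℕ), by have := i.isLt; omega⟩ : Fin k) := Fin.ext hc
    rw [hidx]
    simp only [hh]
    rw [if_pos (show ((⟨(i : ℕ), by have := i.isLt; omega⟩ : Fin k) : ℕ) < (j : ℕ) from i.isLt)]
  · refine integral_congr_ae (Filter.EventuallyEq.of_eq (funext fun v => ?_))
    refine Finset.prod_congr rfl fun i _ => ?_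
    have hc : (((finSumFinEquiv.trans (finCongr hpq)) (Sum.inr i)) : ℕ) = (j : ℕ) + (i : ℕ) := by
      simp
    have hidx : ((finSumFinEquiv.trans (finCongr hpq)) (Sum.inr i))
        = (⟨(j : ℕ) + (i : ℕ), by have := i.isLt; omega⟩ : Fin k) := Fin.ext hc
    rw [hidx]
    simp only [hh]
    rw [if_neg (by simp)]
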